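/- Let V be a real vector space, let g ∈ ℝ with g ≠ 0, let t < 1, let Lˣˣ, Lˣᵛ, Lᵛᵛ, ℓ ∈ ℝ with Lˣˣ ≠ 0 and Lᵛᵛ ≠ 0, and let x₁, ε₀, ε₁ ∈ V. Set cˣ t := t²(t² − 4t + 6)/3, cᵛ t := 4t(t² − 3t + 3)/3, μˣ t := cˣ t • x₁, μᵛ t := cᵛ t • x₁, P₁₁ := −4/(g²(t−1)), x_t := μˣ t + Lˣˣ • ε₀, v_t := μᵛ t + Lˣᵛ • ε₀ + Lᵛᵛ • ε₁, β := (Lᵛᵛ + ℓ/(2 P₁₁))/Lᵛᵛ, α := (Lˣˣ/(1−t) + Lˣᵛ − β Lˣᵛ)/Lˣˣ, and F := (4(1−t)²) • x₁ − (g² P₁₁) • ((Lˣˣ/(1−t) + Lˣᵛ) • ε₀ + Lᵛᵛ • ε₁) − (g² ℓ / 2) • ε₁. Then F + (g² P₁₁) • (α • x_t + β • v_t) = (4(1−t)² + g² P₁₁ (α · cˣ t + β · cᵛ t)) • x₁; in particular, whenever the scalar 4(1−t)² + g² P₁₁ (α cˣ t + β cᵛ t) is nonzero, the target data point x₁ is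 recovered as x₁ = (4(1−t)² + g² P₁₁ (α cˣ t + β cᵛ t))⁻¹ • (F + (g² P₁₁) • (α • x_t + β • v_t)). (Sampling-hop for the AGM probabilistic ODE.) -/

import Mathlib

/-- Sampling-hop for the AGM probabilistic ODE: with the force
`F = 4(1−t)² x₁ − g² P₁₁ ((Lˣˣ/(1−t) + Lˣᵛ) ε₀ + Lᵛᵛ ε₁) − (g² ℓ/2) ε₁`
and suitable coefficients `α, β`, one has
`F + g² P₁₁ (α x_t + β v_t) = (4(1−t)² + g² P₁₁ (α cˣ t + β cᵛ t)) x₁`,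
and hence `x₁` is recovered whenever the scalar on the right is nonzero. -/
theorem sampling_hop_ode
    {V : Type*} [AddCommGroup V] [Module ℝ V]
    (g t : ℝ) (hg : g ≠ 0) (ht : t < 1)
    (Lxx Lxv Lvv ℓ : ℝ) (hLxx : Lxx ≠ 0) (hLvv : Lvv ≠ 0)
    (x₁ ε₀ ε₁ : V)
    (cx cv : ℝ) (μx μv xt vt : V) (P₁₁ α β : ℝ) (F : V)
    (hcx : cx = t ^ 2 * (t ^ 2 - 4 * t + 6) / 3)
    (hcv : cv = 4 * t * (t ^ 2 - 3 * t + 3) / 3)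
    (hμx : μx = cx • x₁) (hμv : μv = cv • x₁)
    (hP₁₁ : P₁₁ = -4 / (g ^ 2 * (t - 1)))
    (hxt : xt = μx + Lxx • ε₀)
    (hvt : vt = μv + Lxv • ε₀ + Lvv • ε₁)
    (hβ : β = (Lvv + ℓ / (2 * P₁₁)) / Lvv)
    (hα : α = (Lxx / (1 - t) + Lxv - β * Lxv) / Lxx)
    (hF : F = (4 * (1 - t) ^ 2) • x₁
        - (g ^ 2 * P₁₁) • ((Lxx / (1 - t) + Lxv) • ε₀ + Lvv • ε₁)
        - (g ^ 2 * ℓ / 2) • ε₁) :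
    F + (g ^ 2 * P₁₁) • (α • xt + β • vt) =
      (4 * (1 - t) ^ 2 + g ^ 2 * P₁₁ * (α * cx + β * cv)) • x₁ ∧
    (4 * (1 - t) ^ 2 + g ^ 2 * P₁₁ * (α * cx + β * cv) ≠ 0 →
      x₁ = (4 * (1 - t) ^ 2 + g ^ 2 * P₁₁ * (α * cx + β * cv))⁻¹ •
        (F + (g ^ 2 * P₁₁) • (α • xt + β • vt))) := by
  have ht' : (1 : ℝ) - t ≠ 0 := by linarith
  have hP : P₁₁ ≠ 0 := by
    rw [hP₁₁]
    have : g ^ 2 * (t - 1) ≠ 0 := by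
      apply mul_ne_zero (pow_ne_zero _ hg); linarith
    simp [this]
  have hmain : F + (g ^ 2 * P₁₁) • (α • xt + β • vt) =
      (4 * (1 - t) ^ 2 + g ^ 2 * P₁₁ * (α * cx + β * cv)) • x₁ := by
    subst hF hxt hvt hμx hμv
    match_scalars
    · ring
    · field_simp [hα, hβ] at *
      linear_combination (g ^ 2 * P₁₁) * hα
    · field_simp [hβ] at *
      linear_combination g ^ 2 * hβ
  refine ⟨hmain, fun hne => ?_⟩
  rw [hmain, smul_smul, inv_mul_cancel₀ hne, one_smul]
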